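/- Define g : (−1,1) → ℝ by g(z) = 9/(4(1−z)²) − (log(1−z))²/(12(1−z)) + L₂(z)/(6(1−z)) − 121/(54(1−z)) + 7·log(1−z)/(3(1−z)) + (1/(18(1−z)))·log((1+z)/(1−z)) − 1/72 − (1/72)(1−z) − (1/144)(1−z)²·log((1+z)/(1−z)) + (1/54)(1−z)². Then there exists a real sequence (c_n)_{n≥0} such that for every real z with |z| < 1 the series ∑_{n≥0} c_n·z^n converges to g(z), and for every n ≥ 3, c_n = (9/4)·n − (1/12)·∑_{k=1}^{n−1} H_k/(n−k) + (1/6)·∑_{k=2}^n H^alt_{k−1}/k − (41/18)·H_n − (1/18)·H^alt_n + 1/108 − ( 1/(72(n−2)) if n is odd ) + ( 1/(36(n−1)) if n is even ) − ( 1/(72·n) if n is odd ). (c_n is the average number of key comparisons of dual-pivot quickselect with the 'Clairvoyant' partitioning strategy when selecting the smallest element of n elements.) -/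

import Mathlib

open Finset

/-- Harmonic numbers `H_n = ∑_{k=1}^n 1/k`. -/
noncomputable def H (n : ℕ) : ℝ := ∑ k ∈ Finset.Icc 1 n, (1 : ℝ) / k

/-- Alternating harmonic numbers `H^alt_n = ∑_{k=1}^n (-1)^k/k`. -/
noncomputable def Halt (n : ℕ) : ℝ := ∑ k ∈ Finset.Icc 1 n, (-1 : ℝ) ^ k / k

/-- `L₂(z) = −∫₀^z log(1+t)/(1−t) dt`. -/
noncomputable def L2 (z : ℝ) : ℝ := -∫ t in (0 : ℝ)..z, Real.log (1 + t) / (1 - t)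

/-- The generating function of the cost of selecting the smallest element with
the "Clairvoyant" partitioning strategy. -/
noncomputable def clairvoyantSmallestGF (z : ℝ) : ℝ :=
  9 / (4 * (1 - z) ^ 2)
  - Real.log (1 - z) ^ 2 / (12 * (1 - z))
  + L2 z / (6 * (1 - z))
  - 121 / (54 * (1 - z))
  + 7 * Real.log (1 - z) / (3 * (1 - z))
  + 1 / (18 * (1 - z)) * Real.log ((1 + z) / (1 - z))
  - 1 / 72
  - 1 / 72 * (1 - z)
  - 1 / 144 * (1 - z) ^ 2 * Real.log ((1 + z) / (1 - z))
  + 1 / 54 * (1 - z) ^ 2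

noncomputable def lg (n : ℕ) : ℝ := if n = 0 then 0 else 1 / n
noncomputable def lga (n : ℕ) : ℝ := if n = 0 then 0 else (-1 : ℝ) ^ (n + 1) / n
noncomputable def eL (n : ℕ) : ℝ := if n = 0 then 0 else Halt (n - 1) / n
noncomputable def dd (n : ℕ) : ℝ := if Odd n then 2 / n else 0

lemma H_succ (n : ℕ) : H (n + 1) = H n + 1 / (n + 1) := by
  rw [H, H, Finset.sum_Icc_succ_top (by omega)]
  push_cast; ring

lemma Halt_succ (n : ℕ) : Halt (n + 1) = Halt n + (-1 : ℝ) ^ (n + 1) / (n + 1) := by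
  rw [Halt, Halt, Finset.sum_Icc_succ_top (by omega)]
  push_cast; ring

lemma H_nonneg (n : ℕ) : 0 ≤ H n := by
  apply Finset.sum_nonneg; intro k hk; positivity

lemma H_le (n : ℕ) : H n ≤ n := by
  induction n with
  | zero => simp [H]
  | succ n ih =>
    rw [H_succ]
    have : 1 / ((n : ℝ) + 1) ≤ 1 := by
      rw [div_le_one (by positivity)]; linarith [Nat.cast_nonneg (α := ℝ) n]
    push_cast; linarith

lemma abs_Halt_le (n : ℕ) : |Halt n| ≤ n := by
  calc |Halt n| ≤ ∑ k ∈ Finset.Icc 1 n, |(-1 : ℝ) ^ k / k| := Finset.abs_sum_le_sum_abs _ _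
    _ ≤ H n := by
        apply Finset.sum_le_sum
        intro k hk
        rw [abs_div, abs_pow, abs_neg, abs_one, one_pow, Nat.abs_cast]
    _ ≤ n := H_le n


lemma sum_lg (n : ℕ) : ∑ k ∈ range (n + 1), lg k = H n := by
  induction n with
  | zero => simp [lg, H]
  | succ n ih => rw [Finset.sum_range_succ, ih, H_succ, lg]; push_cast; simp

lemma sum_lga (n : ℕ) : ∑ k ∈ range (n + 1), lga k = -Halt n := by
  induction n with
  | zero => simp [lga, Halt]
  | succ n ih =>
    rw [Finset.sum_range_succ, ih, Halt_succ, lga]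
    simp only [Nat.succ_ne_zero, if_false]
    push_cast; ring

lemma sum_eL (n : ℕ) : ∑ k ∈ range (n + 1), eL k = ∑ k ∈ Icc 1 n, Halt (k - 1) / (k : ℝ) := by
  induction n with
  | zero => simp [eL]
  | succ n ih =>
    rw [Finset.sum_range_succ, ih, Finset.sum_Icc_succ_top (by omega), eL]
    simp


lemma abs_lg_le (n : ℕ) : |lg n| ≤ (n : ℝ) + 1 := by
  rcases n with _ | m
  · simp [lg]
  · simp only [lg, Nat.succ_ne_zero, if_false]
    rw [abs_div, abs_one, Nat.abs_cast]
    rw [div_le_iff₀ (by positivity)]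
    push_cast
    nlinarith [Nat.cast_nonneg (α := ℝ) m]

lemma abs_lga_le (n : ℕ) : |lga n| ≤ (n : ℝ) + 1 := by
  rcases n with _ | m
  · simp [lga]
  · simp only [lga, Nat.succ_ne_zero, if_false]
    rw [abs_div, abs_pow, abs_neg, abs_one, one_pow, Nat.abs_cast]
    rw [div_le_iff₀ (by positivity)]
    push_cast
    nlinarith [Nat.cast_nonneg (α := ℝ) m]

lemma abs_eL_le (n : ℕ) : |eL n| ≤ (n : ℝ) + 1 := by
  rcases n with _ | m
  · simp [eL]
  · simp only [eL, Nat.succ_ne_zero, if_false]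
    rw [abs_div, Nat.abs_cast]
    rw [div_le_iff₀ (by positivity)]
    have h1 : |Halt m| ≤ (m : ℝ) := abs_Halt_le m
    have : ((m : ℝ)) ≤ ((m:ℝ) + 1 + 1) * ((m:ℝ) + 1) := by nlinarith [Nat.cast_nonneg (α := ℝ) m]
    push_cast
    linarith

lemma abs_H_le (n : ℕ) : |H n| ≤ (n : ℝ) + 1 := by
  rw [abs_of_nonneg (H_nonneg n)]
  linarith [H_le n]

lemma abs_negHalt_le (n : ℕ) : |(-Halt n)| ≤ (n : ℝ) + 1 := by
  rw [abs_neg]; linarith [abs_Halt_le n]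

lemma abs_one_le (n : ℕ) : |(1 : ℝ)| ≤ (n : ℝ) + 1 := by
  rw [abs_one]; linarith [Nat.cast_nonneg (α := ℝ) n]

lemma summable_norm_coeff_mul {z : ℝ} (hz : |z| < 1) {c : ℕ → ℝ}
    (hc : ∀ n, |c n| ≤ (n : ℝ) + 1) : Summable (fun n => ‖c n * z ^ n‖) := by
  have h1 : Summable (fun n : ℕ => ((n : ℝ)) * |z| ^ n) := by
    simpa using summable_pow_mul_geometric_of_norm_lt_one (R := ℝ) 1 (r := |z|) (by simpa using hz)
  have h2 : Summable (fun n : ℕ => |z| ^ n) := summable_geometric_of_lt_one (abs_nonneg z) hz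
  have hs : Summable (fun n : ℕ => ((n : ℝ) + 1) * |z| ^ n) := by
    simpa [add_mul] using h1.add h2
  apply Summable.of_nonneg_of_le (fun n => norm_nonneg _) _ hs
  intro n
  rw [norm_mul, norm_pow, Real.norm_eq_abs, Real.norm_eq_abs]
  exact mul_le_mul_of_nonneg_right (hc n) (by positivity)

lemma hs_geom {z : ℝ} (hz : |z| < 1) : HasSum (fun n : ℕ => (1 : ℝ) * z ^ n) (1 - z)⁻¹ := by
  simpa using hasSum_geometric_of_norm_lt_one (ξ := z) (by simpa using hz)

lemma hs_log {z : ℝ} (hz : |z| < 1) :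
    HasSum (fun n : ℕ => lg n * z ^ n) (-Real.log (1 - z)) := by
  refine (hasSum_nat_add_iff' 1).mp ?_
  convert Real.hasSum_pow_div_log_of_abs_lt_one hz using 1
  · rfl
  · funext n
    simp only [lg, Nat.succ_ne_zero, if_false]
    push_cast
    ring
  · simp [lg]

lemma hs_loga {z : ℝ} (hz : |z| < 1) :
    HasSum (fun n : ℕ => lga n * z ^ n) (Real.log (1 + z)) := by
  refine (hasSum_nat_add_iff' 1).mp ?_
  have h := (Real.hasSum_pow_div_log_of_abs_lt_one (x := -z) (by simpa using hz)).neg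
  simp only [sub_neg_eq_add, neg_neg] at h
  convert h using 1
  · funext n
    simp only [lga, Nat.succ_ne_zero, if_false, neg_pow (-z)]
    rw [neg_pow]
    push_cast
    ring
  · simp [lga]

lemma cauchy {z : ℝ} (hz : |z| < 1) {f g : ℕ → ℝ} {A B : ℝ}
    (hfb : ∀ n, |f n| ≤ (n : ℝ) + 1) (hgb : ∀ n, |g n| ≤ (n : ℝ) + 1)
    (hf : HasSum (fun n => f n * z ^ n) A) (hg : HasSum (fun n => g n * z ^ n) B) :
    HasSum (fun n => (∑ k ∈ range (n + 1), f k * g (n - k)) * z ^ n) (A * B) := by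
  have hF := summable_norm_coeff_mul hz hfb
  have hG := summable_norm_coeff_mul hz hgb
  have h := hasSum_sum_range_mul_of_summable_norm hF hG
  rw [hf.tsum_eq, hg.tsum_eq] at h
  convert h using 1
  · rfl
  funext n
  rw [Finset.sum_mul]
  apply Finset.sum_congr rfl
  intro k hk
  have hk' : k ≤ n := Nat.lt_succ_iff.mp (Finset.mem_range.mp hk)
  have hzz : z ^ k * z ^ (n - k) = z ^ n := by
    rw [← pow_add]; congr 1; omega
  linear_combination f k * g (n - k) * hzz.symm


lemma hs_inv_sq {z : ℝ} (hz : |z| < 1) :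
    HasSum (fun n : ℕ => ((n : ℝ) + 1) * z ^ n) (1 / (1 - z) ^ 2) := by
  have h1 : HasSum (fun n : ℕ => (n : ℝ) * z ^ n) (z / (1 - z) ^ 2) :=
    hasSum_coe_mul_geometric_of_norm_lt_one (by simpa using hz)
  have h2 := hs_geom hz
  have hne : (1 : ℝ) - z ≠ 0 := by
    intro hc
    rw [show z = 1 by linarith] at hz
    simp at hz
  convert h1.add h2 using 1
  · funext n; ring
  · field_simp
    ring

lemma hs_H {z : ℝ} (hz : |z| < 1) :
    HasSum (fun n : ℕ => H n * z ^ n) (-Real.log (1 - z) * (1 - z)⁻¹) := by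
  have h := cauchy hz abs_lg_le abs_one_le (hs_log hz) (hs_geom hz)
  convert h using 2 with n
  rw [← sum_lg n]
  simp [mul_one]

lemma hs_negHalt {z : ℝ} (hz : |z| < 1) :
    HasSum (fun n : ℕ => (-Halt n) * z ^ n) (Real.log (1 + z) * (1 - z)⁻¹) := by
  have h := cauchy hz abs_lga_le abs_one_le (hs_loga hz) (hs_geom hz)
  convert h using 2 with n
  rw [← sum_lga n]
  simp [mul_one]

lemma coeff_logsq (n : ℕ) :
    ∑ k ∈ range (n + 1), lg k * H (n - k) = ∑ k ∈ Icc 1 (n - 1), H k / ((n : ℝ) - k) := by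
  have step1 : ∑ k ∈ range (n + 1), lg k * H (n - k)
      = ∑ k ∈ Icc 1 (n - 1), lg k * H (n - k) := by
    refine (Finset.sum_subset ?_ ?_).symm
    · intro k hk
      simp only [Finset.mem_Icc] at hk
      simp only [Finset.mem_range]
      omega
    · intro k hk hk'
      simp only [Finset.mem_range] at hk
      simp only [Finset.mem_Icc] at hk'
      rcases Nat.eq_zero_or_pos k with h0 | h0
      · simp [h0, lg]
      · have : k = n := by omega
        subst this
        simp [H]
  rw [step1]
  refine Finset.sum_nbij' (i := fun k => n - k) (j := fun k => n - k) ?_ ?_ ?_ ?_ ?_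
  · intro k hk
    simp only [Finset.mem_Icc] at *
    omega
  · intro k hk
    simp only [Finset.mem_Icc] at *
    omega
  · intro k hk
    simp only [Finset.mem_Icc] at hk
    omega
  · intro k hk
    simp only [Finset.mem_Icc] at hk
    omega
  · intro k hk
    simp only [Finset.mem_Icc] at hk
    have h2 : ((n - k : ℕ) : ℝ) = (n : ℝ) - k := by
      rw [Nat.cast_sub (by omega)]
    have h3 : (n : ℝ) - ((n - k : ℕ) : ℝ) = (k : ℝ) := by rw [h2]; ring
    rw [h3]
    have hne : ¬ (k = 0) := by omega
    simp only [lg, hne, if_false]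
    ring

lemma hs_logsq {z : ℝ} (hz : |z| < 1) :
    HasSum (fun n : ℕ => (∑ k ∈ Icc 1 (n - 1), H k / ((n : ℝ) - k)) * z ^ n)
      (Real.log (1 - z) ^ 2 * (1 - z)⁻¹) := by
  have h := cauchy hz abs_lg_le abs_H_le (hs_log hz) (hs_H hz)
  convert h using 1
  · funext n
    rw [← coeff_logsq n]
  · ring

lemma mem_uIoc_abs {z t : ℝ} (ht : t ∈ Set.uIoc 0 z) : |t| ≤ |z| := by
  rcases Set.mem_uIoc.mp ht with h | h
  · rw [abs_of_pos h.1]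
    exact le_trans h.2 (le_abs_self z)
  · rw [abs_of_nonpos h.2]
    exact le_trans (neg_le_neg (le_of_lt h.1)) (neg_le_abs z)

lemma summable_bound {z : ℝ} (hz : |z| < 1) :
    Summable (fun n : ℕ => ((n : ℝ) + 1) * |z| ^ n) := by
  have h1 : Summable (fun n : ℕ => ((n : ℝ)) * |z| ^ n) := by
    simpa using summable_pow_mul_geometric_of_norm_lt_one (R := ℝ) 1 (r := |z|) (by simpa using hz)
  have h2 : Summable (fun n : ℕ => |z| ^ n) := summable_geometric_of_lt_one (abs_nonneg z) hz
  simpa [add_mul] using h1.add h2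

lemma hs_L2 {z : ℝ} (hz : |z| < 1) : HasSum (fun n : ℕ => eL n * z ^ n) (L2 z) := by
  have hA : HasSum (fun n : ℕ => ∫ t in (0:ℝ)..z, (-Halt n) * t ^ n)
      (∫ t in (0:ℝ)..z, Real.log (1 + t) / (1 - t)) := by
    apply intervalIntegral.hasSum_integral_of_dominated_convergence
      (bound := fun (n : ℕ) (_ : ℝ) => ((n : ℝ) + 1) * |z| ^ n)
    · intro n
      exact Continuous.aestronglyMeasurable (by continuity)
    · intro n
      apply Filter.Eventually.of_forall
      intro t ht
      rw [norm_mul, norm_pow, Real.norm_eq_abs, Real.norm_eq_abs, abs_neg]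
      have h1 : |Halt n| ≤ (n : ℝ) := abs_Halt_le n
      have h2 : |t| ≤ |z| := mem_uIoc_abs ht
      have h3 : |t| ^ n ≤ |z| ^ n := pow_le_pow_left₀ (abs_nonneg t) h2 n
      nlinarith [abs_nonneg (Halt n), pow_nonneg (abs_nonneg t) n, pow_nonneg (abs_nonneg z) n]
    · apply Filter.Eventually.of_forall
      intro t _
      exact summable_bound hz
    · exact intervalIntegrable_const
    · apply Filter.Eventually.of_forall
      intro t ht
      have ht1 : |t| < 1 := lt_of_le_of_lt (mem_uIoc_abs ht) hz
      rw [div_eq_mul_inv]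
      exact hs_negHalt ht1
  have hB : HasSum (fun n : ℕ => Halt n * (z ^ (n + 1) / ((n : ℝ) + 1))) (L2 z) := by
    have := hA.neg
    rw [show -∫ t in (0:ℝ)..z, Real.log (1 + t) / (1 - t) = L2 z from rfl] at this
    convert this using 1
    · rfl
    funext n
    rw [intervalIntegral.integral_const_mul, integral_pow]
    push_cast
    rw [zero_pow (by omega)]
    ring
  refine (hasSum_nat_add_iff' 1).mp ?_
  convert hB using 1
  · rfl
  · funext n
    simp only [eL, Nat.succ_ne_zero, if_false, Nat.add_sub_cancel]
    push_cast
    ring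
  · simp [eL]

lemma hs_L2div {z : ℝ} (hz : |z| < 1) :
    HasSum (fun n : ℕ => (∑ k ∈ Icc 1 n, Halt (k - 1) / (k : ℝ)) * z ^ n)
      (L2 z * (1 - z)⁻¹) := by
  have h := cauchy hz abs_eL_le abs_one_le (hs_L2 hz) (hs_geom hz)
  convert h using 2 with n
  rw [← sum_eL n]
  simp [mul_one]

lemma hs_atanh {z : ℝ} (hz : |z| < 1) :
    HasSum (fun n : ℕ => dd n * z ^ n) (Real.log (1 + z) - Real.log (1 - z)) := by
  have h := Real.hasSum_log_sub_log_of_abs_lt_one hz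
  have hi : Function.Injective (fun k : ℕ => 2 * k + 1) := fun a b hab => by
    simp only [] at hab; omega
  refine (Function.Injective.hasSum_iff hi ?_).mp ?_
  · intro x hx
    have hodd : ¬ Odd x := by
      intro ⟨m, hm⟩
      exact hx ⟨m, by simp only []; omega⟩
    simp [dd, hodd]
  · convert h using 1
    funext k
    have hodd : Odd (2 * k + 1) := ⟨k, by ring⟩
    simp only [Function.comp, dd, hodd, if_true]
    push_cast
    ring

lemma hs_atanh1 {z : ℝ} (hz : |z| < 1) :
    HasSum (fun n : ℕ => dd (n - 1) * z ^ n)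
      (z * (Real.log (1 + z) - Real.log (1 - z))) := by
  refine (hasSum_nat_add_iff' 1).mp ?_
  convert (hs_atanh hz).mul_left z using 1
  · rfl
  · funext n
    simp only [Nat.add_sub_cancel]
    ring
  · simp [dd]

lemma hs_atanh2 {z : ℝ} (hz : |z| < 1) :
    HasSum (fun n : ℕ => dd (n - 2) * z ^ n)
      (z ^ 2 * (Real.log (1 + z) - Real.log (1 - z))) := by
  refine (hasSum_nat_add_iff' 2).mp ?_
  convert (hs_atanh hz).mul_left (z ^ 2) using 1
  · rfl
  · funext n
    simp only [Nat.add_sub_cancel]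
    ring
  · have : ∑ i ∈ range 2, dd (i - 2) * z ^ i = 0 := by
      rw [Finset.sum_range_succ, Finset.sum_range_one]
      norm_num [dd]
    rw [this, sub_zero]

noncomputable def pc (n : ℕ) : ℝ :=
  if n = 0 then -1/72 - 1/72 + 1/54 else if n = 1 then 1/72 - 2/54 else if n = 2 then 1/54 else 0

lemma hs_pc (z : ℝ) :
    HasSum (fun n : ℕ => pc n * z ^ n)
      (-1/72 - 1/72 * (1 - z) + 1/54 * (1 - z) ^ 2) := by
  have h : HasSum (fun n : ℕ => pc n * z ^ n) (∑ i ∈ range 3, pc i * z ^ i) := by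
    apply hasSum_sum_of_ne_finset_zero
    intro x hx
    have hx3 : 3 ≤ x := by
      by_contra hc
      exact hx (Finset.mem_range.mpr (by omega))
    have h0 : ¬ (x = 0) := by omega
    have h1 : ¬ (x = 1) := by omega
    have h2 : ¬ (x = 2) := by omega
    simp [pc, h0, h1, h2]
  convert h using 1
  rw [Finset.sum_range_succ, Finset.sum_range_succ, Finset.sum_range_one]
  norm_num [pc]
  ring


noncomputable def cc (n : ℕ) : ℝ :=
  9/4 * ((n : ℝ) + 1)
  - 1/12 * (∑ k ∈ Icc 1 (n - 1), H k / ((n : ℝ) - k))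
  + 1/6 * (∑ k ∈ Icc 1 n, Halt (k - 1) / (k : ℝ))
  - 121/54 * 1
  - 7/3 * H n
  + 1/18 * (H n + (-Halt n))
  + pc n
  - 1/144 * (dd n - 2 * dd (n - 1) + dd (n - 2))

theorem main_hassum {z : ℝ} (hz : |z| < 1) :
    HasSum (fun n : ℕ => cc n * z ^ n) (clairvoyantSmallestGF z) := by
  have h1m : (0 : ℝ) < 1 - z := by
    rcases abs_lt.mp hz with ⟨h1, h2⟩; linarith
  have h1p : (0 : ℝ) < 1 + z := by
    rcases abs_lt.mp hz with ⟨h1, h2⟩; linarith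
  have hne : (1 : ℝ) - z ≠ 0 := ne_of_gt h1m
  have T :=
    (((((((((hs_inv_sq hz).mul_left (9/4)).sub
      ((hs_logsq hz).mul_left (1/12))).add
      ((hs_L2div hz).mul_left (1/6))).sub
      ((hs_geom hz).mul_left (121/54))).sub
      ((hs_H hz).mul_left (7/3))).add
      (((hs_H hz).add (hs_negHalt hz)).mul_left (1/18))).add
      (hs_pc z)).sub
      ((((hs_atanh hz).sub ((hs_atanh1 hz).mul_left 2)).add
        (hs_atanh2 hz)).mul_left (1/144)))
  convert T using 1
  · rfl
  · funext n
    simp only [cc]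
    ring
  · rw [clairvoyantSmallestGF,
      Real.log_div (ne_of_gt h1p) (ne_of_gt h1m)]
    field_simp
    ring

theorem main_coeff (n : ℕ) (hn : 3 ≤ n) :
    cc n =
      9 / 4 * (n : ℝ)
      - 1 / 12 * ∑ k ∈ Finset.Icc 1 (n - 1), H k / ((n : ℝ) - (k : ℝ))
      + 1 / 6 * ∑ k ∈ Finset.Icc 2 n, Halt (k - 1) / (k : ℝ)
      - 41 / 18 * H n
      - 1 / 18 * Halt n
      + 1 / 108
      - (if Odd n then 1 / (72 * ((n : ℝ) - 2)) else 0)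
      + (if Even n then 1 / (36 * ((n : ℝ) - 1)) else 0)
      - (if Odd n then 1 / (72 * (n : ℝ)) else 0) := by
  have hpc : pc n = 0 := by
    have h0 : ¬ (n = 0) := by omega
    have h1 : ¬ (n = 1) := by omega
    have h2 : ¬ (n = 2) := by omega
    simp [pc, h0, h1, h2]
  have hsum : ∑ k ∈ Icc 1 n, Halt (k - 1) / (k : ℝ)
      = ∑ k ∈ Icc 2 n, Halt (k - 1) / (k : ℝ) := by
    refine (Finset.sum_subset ?_ ?_).symm
    · intro k hk; simp only [Finset.mem_Icc] at *; omega
    · intro k hk hk'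
      simp only [Finset.mem_Icc] at *
      have : k = 1 := by omega
      subst this
      simp [Halt]
  have hc1 : ((n - 1 : ℕ) : ℝ) = (n : ℝ) - 1 := by rw [Nat.cast_sub (by omega)]; norm_num
  have hc2 : ((n - 2 : ℕ) : ℝ) = (n : ℝ) - 2 := by rw [Nat.cast_sub (by omega)]; norm_num
  have hn1 : ((n : ℝ)) - 1 ≠ 0 := by
    have : (3 : ℝ) ≤ (n : ℝ) := by exact_mod_cast hn
    linarith
  have hn2 : ((n : ℝ)) - 2 ≠ 0 := by
    have : (3 : ℝ) ≤ (n : ℝ) := by exact_mod_cast hn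
    linarith
  have hnn : ((n : ℝ)) ≠ 0 := by
    have : (3 : ℝ) ≤ (n : ℝ) := by exact_mod_cast hn
    linarith
  rcases Nat.even_or_odd n with he | ho
  · have hno : ¬ Odd n := Nat.not_odd_iff_even.mpr he
    have ho1 : Odd (n - 1) := by
      rw [Nat.odd_iff]; rw [Nat.even_iff] at he; omega
    have hno2 : ¬ Odd (n - 2) := by
      rw [Nat.odd_iff]; rw [Nat.even_iff] at he; omega
    simp only [cc, hpc, hsum, dd, hno, ho1, hno2, if_true, if_false, he, hc1]
    field_simp
    ring
  · have hno : ¬ Even n := Nat.not_even_iff_odd.mpr ho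
    have hno1 : ¬ Odd (n - 1) := by
      rw [Nat.odd_iff]; rw [Nat.odd_iff] at ho; omega
    have ho2 : Odd (n - 2) := by
      rw [Nat.odd_iff]; rw [Nat.odd_iff] at ho; omega
    simp only [cc, hpc, hsum, dd, ho, hno1, ho2, if_true, if_false, hno, hc1, hc2]
    field_simp
    ring


/-- The function `clairvoyantSmallestGF` has a power series
expansion `∑ c_n z^n` on `(−1,1)` whose coefficients, for `n ≥ 3`, equal the
stated exact average cost of selecting the smallest of `n` elements with the
"Clairvoyant" dual-pivot partitioning strategy. -/
theorem clairvoyant_smallest_exact :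
    ∃ c : ℕ → ℝ,
      (∀ z : ℝ, |z| < 1 → HasSum (fun n : ℕ => c n * z ^ n) (clairvoyantSmallestGF z)) ∧
      ∀ n : ℕ, 3 ≤ n →
        c n =
          9 / 4 * (n : ℝ)
          - 1 / 12 * ∑ k ∈ Finset.Icc 1 (n - 1), H k / ((n : ℝ) - (k : ℝ))
          + 1 / 6 * ∑ k ∈ Finset.Icc 2 n, Halt (k - 1) / (k : ℝ)
          - 41 / 18 * H n
          - 1 / 18 * Halt n
          + 1 / 108
          - (if Odd n then 1 / (72 * ((n : ℝ) - 2)) else 0)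
          + (if Even n then 1 / (36 * ((n : ℝ) - 1)) else 0)
          - (if Odd n then 1 / (72 * (n : ℝ)) else 0) := by
  exact ⟨cc, fun z hz => main_hassum hz, fun n hn => main_coeff n hn⟩
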